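/- Let n ≥ 3 and let ζ_n = exp(2πi/n). Then every element of R(U_n) lies in the cyclotomic field ℚ(ζ_n), the subfield of ℂ generated over ℚ by ζ_n. -/

import Mathlib

/-- The antisymmetric bracket `⟨x,y⟩ = x·conj(y) − conj(x)·y`. -/
noncomputable def sbr (x y : ℂ) : ℂ :=
  x * (starRingEnd ℂ) y - (starRingEnd ℂ) x * y

/-- The intersection point `I_{u,v}(p,q)` of the lines `L_u(p)` and `L_v(q)`. -/
noncomputable def Iop (u v p q : ℂ) : ℂ :=
  (sbr u p / sbr u v) * v + (sbr v q / sbr v u) * u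

/-- `origamiPts U` is the smallest subset of `ℂ` containing `0` and `1` that is
closed under `(p,q) ↦ I_{u,v}(p,q)` for all `u, v ∈ U` with `u ≠ ±v`.  This is `R(U)`. -/
inductive origamiPts (U : Set ℂ) : ℂ → Prop
  | zero : origamiPts U 0
  | one : origamiPts U 1
  | inter {u v : ℂ} (hu : u ∈ U) (hv : v ∈ U) (huv : u ≠ v) (huv' : u ≠ -v)
      {p q : ℂ} (hp : origamiPts U p) (hq : origamiPts U q) :
      origamiPts U (Iop u v p q)

lemma conj_sbr (x y : ℂ) : (starRingEnd ℂ) (sbr x y) = - sbr x y := by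
  simp only [sbr, map_sub, map_mul, Complex.conj_conj]
  ring

lemma root_ne_zero' {m : ℕ} (hm : m ≠ 0) {u : ℂ} (hu : u ^ m = 1) : u ≠ 0 := by
  rintro rfl
  rw [zero_pow hm] at hu
  exact zero_ne_one hu

lemma conj_root {m : ℕ} (hm : m ≠ 0) {u : ℂ} (hu : u ^ m = 1) :
    (starRingEnd ℂ) u = u⁻¹ := by
  have habs : ‖u‖ ^ m = 1 := by
    rw [← norm_pow, hu, norm_one]
  have h1 : ‖u‖ = 1 := by
    rcases lt_trichotomy (‖u‖) 1 with h | h | h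
    · have := pow_lt_one₀ (norm_nonneg u) h hm
      rw [habs] at this; exact absurd this (lt_irrefl 1)
    · exact h
    · have := one_lt_pow₀ h hm
      rw [habs] at this; exact absurd this (lt_irrefl 1)
  have hns : u * (starRingEnd ℂ) u = 1 := by
    rw [Complex.mul_conj, Complex.normSq_eq_norm_sq, h1]
    norm_num
  exact eq_inv_of_mul_eq_one_right hns

/-- Every element of `R(U_n)` lies in the cyclotomic field `ℚ(ζ_n)`, the subfield of `ℂ`
generated (over its prime field `ℚ`) by `ζ_n = exp(2πi/n)`.  Here `U_n` is the group of
`2n`-th roots of unity in `ℂ`. -/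
theorem stmt_13 (n : ℕ) (hn : 3 ≤ n) (z : ℂ)
    (hz : origamiPts {w : ℂ | w ^ (2 * n) = 1} z) :
    z ∈ Subfield.closure {Complex.exp (2 * Real.pi * Complex.I / n)} := by
  have hn0 : n ≠ 0 := by omega
  have h2n0 : 2 * n ≠ 0 := by omega
  haveI : NeZero n := ⟨hn0⟩
  set ζ : ℂ := Complex.exp (2 * Real.pi * Complex.I / n) with hζ
  set F : Subfield ℂ := Subfield.closure {ζ} with hF
  have hζF : ζ ∈ F := Subfield.subset_closure rfl
  have hprim : IsPrimitiveRoot ζ n := Complex.isPrimitiveRoot_exp n hn0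
  -- the square of any element of U_n lies in F
  have hsq : ∀ u : ℂ, u ^ (2 * n) = 1 → u ^ 2 ∈ F := by
    intro u hu
    have : (u ^ 2) ^ n = 1 := by rw [← pow_mul, mul_comm]; rwa [mul_comm] at hu
    obtain ⟨i, _, hi⟩ := hprim.eq_pow_of_pow_eq_one this
    rw [← hi]
    exact pow_mem hζF i
  suffices h : z ∈ F ∧ (starRingEnd ℂ) z ∈ F from h.1
  induction hz with
  | zero => exact ⟨zero_mem F, by simpa using zero_mem F⟩
  | one => exact ⟨one_mem F, by simpa using one_mem F⟩
  | @inter u v hu hv huv huv' p q hp hq ihp ihq =>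
    have hu' : u ^ (2 * n) = 1 := hu
    have hv' : v ^ (2 * n) = 1 := hv
    have u0 : u ≠ 0 := root_ne_zero' h2n0 hu'
    have v0 : v ≠ 0 := root_ne_zero' h2n0 hv'
    have cu : (starRingEnd ℂ) u = u⁻¹ := conj_root h2n0 hu'
    have cv : (starRingEnd ℂ) v = v⁻¹ := conj_root h2n0 hv'
    have hu2F : u ^ 2 ∈ F := hsq u hu'
    have hv2F : v ^ 2 ∈ F := hsq v hv'
    have hsqne : u ^ 2 - v ^ 2 ≠ 0 := by
      intro h
      have : (u - v) * (u + v) = 0 := by ring_nf; linear_combination h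
      rcases mul_eq_zero.mp this with h1 | h1
      · exact huv (sub_eq_zero.mp h1)
      · exact huv' (eq_neg_of_add_eq_zero_left h1)
    have hsqne' : v ^ 2 - u ^ 2 ≠ 0 := fun h => hsqne (by linear_combination -h)
    have hsuv : sbr u v = (u ^ 2 - v ^ 2) / (u * v) := by
      unfold sbr; rw [cu, cv]; field_simp
    have hsvu : sbr v u = (v ^ 2 - u ^ 2) / (v * u) := by
      unfold sbr; rw [cu, cv]; field_simp
    have hsup : sbr u p = (u ^ 2 * (starRingEnd ℂ) p - p) / u := by
      unfold sbr; rw [cu]; field_simp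
    have hsvq : sbr v q = (v ^ 2 * (starRingEnd ℂ) q - q) / v := by
      unfold sbr; rw [cv]; field_simp
    have hsbruv : sbr u v ≠ 0 := by
      rw [hsuv]
      exact div_ne_zero hsqne (mul_ne_zero u0 v0)
    have hsbrvu : sbr v u ≠ 0 := by
      have : sbr v u = -sbr u v := by unfold sbr; ring
      rw [this]; exact neg_ne_zero.mpr hsbruv
    -- the two terms of Iop
    set A : ℂ := sbr u p / sbr u v * v with hA
    set B : ℂ := sbr v q / sbr v u * u with hB
    have hAval : A = v ^ 2 * (u ^ 2 * (starRingEnd ℂ) p - p) / (u ^ 2 - v ^ 2) := by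
      rw [hA, hsup, hsuv]; field_simp [u0, v0, hsqne]
    have hBval : B = u ^ 2 * (v ^ 2 * (starRingEnd ℂ) q - q) / (v ^ 2 - u ^ 2) := by
      rw [hB, hsvq, hsvu]; field_simp [u0, v0, hsqne']
    have hAF : A ∈ F := by
      rw [hAval]
      exact div_mem (mul_mem hv2F (sub_mem (mul_mem hu2F ihp.2) ihp.1))
        (sub_mem hu2F hv2F)
    have hBF : B ∈ F := by
      rw [hBval]
      exact div_mem (mul_mem hu2F (sub_mem (mul_mem hv2F ihq.2) ihq.1))
        (sub_mem hv2F hu2F)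
    have hconjA : (starRingEnd ℂ) A = A * (v ^ 2)⁻¹ := by
      rw [hA, map_mul, map_div₀, conj_sbr, conj_sbr, neg_div_neg_eq, cv]
      field_simp
    have hconjB : (starRingEnd ℂ) B = B * (u ^ 2)⁻¹ := by
      rw [hB, map_mul, map_div₀, conj_sbr, conj_sbr, neg_div_neg_eq, cu]
      field_simp
    constructor
    · show Iop u v p q ∈ F
      have : Iop u v p q = A + B := rfl
      rw [this]; exact add_mem hAF hBF
    · have : (starRingEnd ℂ) (Iop u v p q) = A * (v ^ 2)⁻¹ + B * (u ^ 2)⁻¹ := by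
        show (starRingEnd ℂ) (A + B) = _
        rw [map_add, hconjA, hconjB]
      rw [this]
      exact add_mem (mul_mem hAF (inv_mem hv2F)) (mul_mem hBF (inv_mem hu2F))
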